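/- (Lemma 4, conformance of composition.) Let R1, R2 be FSMr machines (requirement FSMv's) for two features and D1, D2 the corresponding FSMd machines (design FSMv's), with Di and Ri sharing the event alphabet Σi, the variable sets of D1, D2, R1, R2 being pairwise disjoint. Suppose D1 ≤Φ1 R1 and D2 ≤Φ2 R2 via conformance mappings Φ1 and Φ2. Let D1 ∥ D2 be composed with a design composition predicate and R1 ∥ R2 with a requirement composition predicate, and define the addition Φ = Φ1 + Φ2 by: for every valid configuration π^d = π^d_1 + π^d_2 of D1 ∥ D2, Φ(π^d) = { π^r : π^r is a valid configuration of R1 ∥ R2 and π^r = π^r_1 + π^r_2 for some π^r_1 ∈ Φ1(π^d_1) and π^r_2 ∈ Φ2(π^d_2) }. Then for every valid configuration π^d of D1 ∥ D2 and every π^r ∈ Φ(π^d), L((D1 ∥ D2)↓π^d) ⊆ L((R1 ∥ R2)↓π^r). -/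

import Mathlib

attribute [local instance] Classical.propDecidable

/-- A configuration over a set `S` of variables: an assignment of a value in
`Dm x` to every variable `x ∈ S`. -/
def Config {V : Type} (Dm : V → Type) (S : Set V) : Type :=
  ∀ x : V, x ∈ S → Dm x

/-- The restriction of a configuration over `S ∪ T` to `S`. -/
def Config.restrictL {V : Type} {Dm : V → Type} {S T : Set V}
    (π : Config Dm (S ∪ T)) : Config Dm S :=
  fun x hx => π x (Set.mem_union_left T hx)

/-- The restriction of a configuration over `S ∪ T` to `T`. -/
def Config.restrictR {V : Type} {Dm : V → Type} {S T : Set V}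
    (π : Config Dm (S ∪ T)) : Config Dm T :=
  fun x hx => π x (Set.mem_union_right S hx)

/-- `π1 + π2`: the configuration over `S ∪ T` agreeing with `π1` on `S` and
with `π2` on `T` (unique when `S` and `T` are disjoint). -/
noncomputable def Config.plus {V : Type} {Dm : V → Type} {S T : Set V}
    (π1 : Config Dm S) (π2 : Config Dm T) : Config Dm (S ∪ T) :=
  fun x hx =>
    if h : x ∈ S then π1 x h
    else π2 x (((Set.mem_union x S T).mp hx).resolve_left h)

/-- A finite state machine with variability (FSMv): states `Q` with initial state
`q0`, event alphabet `alph ⊆ Ev`, variable set `Vars ⊆ V`, guarded transitions `E`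
(each transition `(s, g, a, s')` has its event `a` in the alphabet), and a global
predicate `ρ` on configurations; a configuration `π` is *valid* if `ρ π` holds. -/
structure FSMv (V : Type) (Dm : V → Type) (Ev : Type) : Type 1 where
  Q : Type
  q0 : Q
  alph : Set Ev
  Vars : Set V
  E : Set (Q × (Config Dm Vars → Prop) × Ev × Q)
  E_alph : ∀ s g a s', (s, g, a, s') ∈ E → a ∈ alph
  ρ : Config Dm Vars → Prop

/-- `A.Reach π w s`: in the variant `A↓π` there is a path from the initial state
to `s` labelled `w`, using only transitions whose guards are satisfied by `π`. -/
inductive FSMv.Reach {V Ev : Type} {Dm : V → Type} (A : FSMv V Dm Ev)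
    (π : Config Dm A.Vars) : List Ev → A.Q → Prop
  | nil : FSMv.Reach A π [] A.q0
  | snoc {w : List Ev} {s : A.Q} {g : Config Dm A.Vars → Prop} {a : Ev} {s' : A.Q} :
      FSMv.Reach A π w s → (s, g, a, s') ∈ A.E → g π → FSMv.Reach A π (w ++ [a]) s'

/-- `A.Lang π = L(A↓π)`: the language of the variant of `A` under configuration `π`. -/
def FSMv.Lang {V Ev : Type} {Dm : V → Type} (A : FSMv V Dm Ev)
    (π : Config Dm A.Vars) : Set (List Ev) :=
  { w | ∃ s, A.Reach π w s }

/-- The parallel composition `A1 ∥ A2` of two FSMv's (over disjoint variable sets)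
with composition predicate `ρ12`: machines synchronize on shared events
`H = Σ1 ∩ Σ2` and move independently on private events; its global predicate
is `ρ12 ∧ ρ1 ∧ ρ2`. -/
def FSMv.par {V Ev : Type} {Dm : V → Type} (A1 A2 : FSMv V Dm Ev)
    (ρ12 : Config Dm (A1.Vars ∪ A2.Vars) → Prop) : FSMv V Dm Ev where
  Q := A1.Q × A2.Q
  q0 := (A1.q0, A2.q0)
  alph := A1.alph ∪ A2.alph
  Vars := A1.Vars ∪ A2.Vars
  E := { t | ∃ (s1 s1' : A1.Q) (s2 s2' : A2.Q) (a : Ev)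
      (g : Config Dm (A1.Vars ∪ A2.Vars) → Prop),
      t = ((s1, s2), g, a, (s1', s2')) ∧
      ((a ∈ A1.alph ∩ A2.alph ∧
          ∃ g1 g2, (s1, g1, a, s1') ∈ A1.E ∧ (s2, g2, a, s2') ∈ A2.E ∧
            g = fun π => g1 π.restrictL ∧ g2 π.restrictR) ∨
       (a ∈ A1.alph \ A2.alph ∧ s2' = s2 ∧
          ∃ g1, (s1, g1, a, s1') ∈ A1.E ∧ g = fun π => g1 π.restrictL) ∨
       (a ∈ A2.alph \ A1.alph ∧ s1' = s1 ∧
          ∃ g2, (s2, g2, a, s2') ∈ A2.E ∧ g = fun π => g2 π.restrictR)) }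
  E_alph := by
    rintro s g a s' ⟨s1, s1', s2, s2', a', g', heq, h⟩
    simp only [Prod.mk.injEq] at heq
    obtain ⟨rfl, rfl, rfl, rfl⟩ := heq
    rcases h with h | h | h
    · exact Set.mem_union_left _ h.1.1
    · exact Set.mem_union_left _ h.1.1
    · exact Set.mem_union_right _ h.1.1
  ρ := fun π => ρ12 π ∧ A1.ρ π.restrictL ∧ A2.ρ π.restrictR

/-- `Φ` is a conformance mapping from the design FSMv `D` to the requirement FSMv
`R` (written `D ≤Φ R`): it assigns to every valid configuration `πd` of `D` a
nonempty set of valid configurations of `R`, with `L(D↓πd) ⊆ L(R↓πr)` for every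
`πr ∈ Φ πd`. -/
def ConformanceMapping {V Ev : Type} {Dm : V → Type} (D R : FSMv V Dm Ev)
    (Φ : Config Dm D.Vars → Set (Config Dm R.Vars)) : Prop :=
  ∀ πd : Config Dm D.Vars, D.ρ πd →
    (Φ πd).Nonempty ∧ ∀ πr ∈ Φ πd, R.ρ πr ∧ D.Lang πd ⊆ R.Lang πr

section AuxLemmas

variable {V Ev : Type} {Dm : V → Type}

theorem Config.restrictL_plus {S T : Set V} (π1 : Config Dm S) (π2 : Config Dm T) :
    (π1.plus π2).restrictL = π1 := by
  funext x hx
  simp [Config.plus, Config.restrictL, hx]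

theorem Config.restrictR_plus {S T : Set V} (h : Disjoint S T)
    (π1 : Config Dm S) (π2 : Config Dm T) :
    (π1.plus π2).restrictR = π2 := by
  funext x hx
  have hxS : x ∉ S := fun hS => Set.disjoint_left.mp h hS hx
  simp [Config.plus, Config.restrictR, hxS]

theorem FSMv.reach_cases {A : FSMv V Dm Ev} {π : Config Dm A.Vars} {w : List Ev} {s : A.Q}
    (h : A.Reach π w s) :
    (w = [] ∧ s = A.q0) ∨
      ∃ w' a s0 g, w = w' ++ [a] ∧ A.Reach π w' s0 ∧ (s0, g, a, s) ∈ A.E ∧ g π := by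
  cases h with
  | nil => exact Or.inl ⟨rfl, rfl⟩
  | snoc h hE hg => exact Or.inr ⟨_, _, _, _, rfl, h, hE, hg⟩

theorem FSMv.reach_nil_inv {A : FSMv V Dm Ev} {π : Config Dm A.Vars} {s : A.Q}
    (h : A.Reach π [] s) : s = A.q0 := by
  rcases FSMv.reach_cases h with ⟨_, rfl⟩ | ⟨w', a, s0, g, hw, _⟩
  · rfl
  · simp at hw

theorem FSMv.reach_snoc_inv {A : FSMv V Dm Ev} {π : Config Dm A.Vars} {w : List Ev}
    {a : Ev} {s' : A.Q} (h : A.Reach π (w ++ [a]) s') :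
    ∃ s g, A.Reach π w s ∧ (s, g, a, s') ∈ A.E ∧ g π := by
  rcases FSMv.reach_cases h with ⟨hw, _⟩ | ⟨w', a', s0, g, hw, hr, hE, hg⟩
  · simp at hw
  · obtain ⟨rfl, ha⟩ := List.append_inj' hw rfl
    simp only [List.cons.injEq] at ha
    obtain ⟨rfl, -⟩ := ha
    exact ⟨s0, g, hr, hE, hg⟩

theorem par_reach_proj {A1 A2 : FSMv V Dm Ev} {ρ12 : Config Dm (A1.Vars ∪ A2.Vars) → Prop}
    {π : Config Dm (A1.Vars ∪ A2.Vars)} {w : List Ev} {s : (A1.par A2 ρ12).Q}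
    (h : (A1.par A2 ρ12).Reach π w s) :
    (∀ a ∈ w, a ∈ A1.alph ∪ A2.alph) ∧
      A1.Reach π.restrictL (w.filter (fun a => a ∈ A1.alph)) s.1 ∧
      A2.Reach π.restrictR (w.filter (fun a => a ∈ A2.alph)) s.2 := by
  induction h with
  | nil => exact ⟨by simp, FSMv.Reach.nil, FSMv.Reach.nil⟩
  | @snoc w s g a s' hr hE hg ih =>
    obtain ⟨hev, ih1, ih2⟩ := ih
    obtain ⟨s1, s1', s2, s2', a', g', heq, hcase⟩ := hE
    cases heq
    rcases hcase with ⟨⟨ha1, ha2⟩, g1, g2, hE1, hE2, rfl⟩ |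
        ⟨⟨ha1, ha2⟩, rfl, g1, hE1, rfl⟩ | ⟨⟨ha2, ha1⟩, rfl, g2, hE2, rfl⟩
    · refine ⟨?_, ?_, ?_⟩
      · intro b hb
        rcases List.mem_append.mp hb with hb | hb
        · exact hev b hb
        · simp only [List.mem_singleton] at hb; subst hb
          exact Set.mem_union_left _ ha1
      · simpa [List.filter_append, ha1] using ih1.snoc hE1 hg.1
      · simpa [List.filter_append, ha2] using ih2.snoc hE2 hg.2
    · refine ⟨?_, ?_, ?_⟩
      · intro b hb
        rcases List.mem_append.mp hb with hb | hb
        · exact hev b hb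
        · simp only [List.mem_singleton] at hb; subst hb
          exact Set.mem_union_left _ ha1
      · simpa [List.filter_append, ha1] using ih1.snoc hE1 hg
      · simpa [List.filter_append, ha2] using ih2
    · refine ⟨?_, ?_, ?_⟩
      · intro b hb
        rcases List.mem_append.mp hb with hb | hb
        · exact hev b hb
        · simp only [List.mem_singleton] at hb; subst hb
          exact Set.mem_union_right _ ha2
      · simpa [List.filter_append, ha1] using ih1
      · simpa [List.filter_append, ha2] using ih2.snoc hE2 hg

theorem par_reach_compose {A1 A2 : FSMv V Dm Ev} {ρ12 : Config Dm (A1.Vars ∪ A2.Vars) → Prop}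
    (hdisj : Disjoint A1.Vars A2.Vars)
    (π1 : Config Dm A1.Vars) (π2 : Config Dm A2.Vars) (w : List Ev)
    (hw : ∀ a ∈ w, a ∈ A1.alph ∪ A2.alph) :
    ∀ s1 s2, A1.Reach π1 (w.filter (fun a => a ∈ A1.alph)) s1 →
      A2.Reach π2 (w.filter (fun a => a ∈ A2.alph)) s2 →
      (A1.par A2 ρ12).Reach (π1.plus π2) w (s1, s2) := by
  induction w using List.reverseRecOn with
  | nil =>
    intro s1 s2 h1 h2
    simp only [List.filter_nil] at h1 h2
    obtain rfl := FSMv.reach_nil_inv h1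
    obtain rfl := FSMv.reach_nil_inv h2
    exact FSMv.Reach.nil
  | append_singleton w a ih =>
    intro s1 s2 h1 h2
    have hw' : ∀ b ∈ w, b ∈ A1.alph ∪ A2.alph := fun b hb => hw b (by simp [hb])
    have ha := hw a (by simp)
    by_cases ha1 : a ∈ A1.alph <;> by_cases ha2 : a ∈ A2.alph
    · simp only [List.filter_append, List.filter_singleton] at h1 h2
      simp [ha1, ha2] at h1 h2
      obtain ⟨t1, g1, hr1, hE1, hg1⟩ := FSMv.reach_snoc_inv h1
      obtain ⟨t2, g2, hr2, hE2, hg2⟩ := FSMv.reach_snoc_inv h2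
      refine (ih hw' t1 t2 hr1 hr2).snoc
        (⟨t1, s1, t2, s2, a, _, rfl, Or.inl ⟨⟨ha1, ha2⟩, g1, g2, hE1, hE2, rfl⟩⟩) ?_
      refine ⟨?_, ?_⟩
      · show g1 (π1.plus π2).restrictL
        rw [Config.restrictL_plus]; exact hg1
      · show g2 (π1.plus π2).restrictR
        rw [Config.restrictR_plus hdisj]; exact hg2
    · simp only [List.filter_append, List.filter_singleton] at h1 h2
      simp [ha1, ha2] at h1 h2
      obtain ⟨t1, g1, hr1, hE1, hg1⟩ := FSMv.reach_snoc_inv h1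
      refine (ih hw' t1 s2 hr1 h2).snoc
        (⟨t1, s1, s2, s2, a, _, rfl, Or.inr (Or.inl ⟨⟨ha1, ha2⟩, rfl, g1, hE1, rfl⟩)⟩) ?_
      show g1 (π1.plus π2).restrictL
      rw [Config.restrictL_plus]
      exact hg1
    · simp only [List.filter_append, List.filter_singleton] at h1 h2
      simp [ha1, ha2] at h1 h2
      obtain ⟨t2, g2, hr2, hE2, hg2⟩ := FSMv.reach_snoc_inv h2
      refine (ih hw' s1 t2 h1 hr2).snoc
        (⟨s1, s1, t2, s2, a, _, rfl, Or.inr (Or.inr ⟨⟨ha2, ha1⟩, rfl, g2, hE2, rfl⟩)⟩) ?_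
      show g2 (π1.plus π2).restrictR
      rw [Config.restrictR_plus hdisj]
      exact hg2
    · exact absurd ha (by simp [ha1, ha2])

end AuxLemmas

/-- **Lemma 4 (conformance of composition).** Let `R1, R2` be requirement FSMv's
and `D1, D2` the corresponding design FSMv's, `Di` and `Ri` sharing the alphabet,
the four variable sets pairwise disjoint, with `D1 ≤Φ1 R1` and `D2 ≤Φ2 R2`.
Compose the designs by `ρd12` and the requirements by `ρr12`, and let
`Φ = Φ1 + Φ2` map each valid configuration `πd = πd1 + πd2` of `D1 ∥ D2` to the
set of valid configurations `πr = πr1 + πr2` of `R1 ∥ R2` with `πr1 ∈ Φ1 πd1` and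
`πr2 ∈ Φ2 πd2`.  Then for every valid configuration `πd` of `D1 ∥ D2` and every
`πr ∈ Φ πd`, `L((D1 ∥ D2)↓πd) ⊆ L((R1 ∥ R2)↓πr)`. -/
theorem conformance_of_composition
    {V Ev : Type} {Dm : V → Type} [∀ x, Finite (Dm x)] [∀ x, Nonempty (Dm x)]
    (D1 D2 R1 R2 : FSMv V Dm Ev)
    (halph1 : D1.alph = R1.alph) (halph2 : D2.alph = R2.alph)
    (hdisj : List.Pairwise Disjoint [D1.Vars, D2.Vars, R1.Vars, R2.Vars])
    (ρd12 : Config Dm (D1.Vars ∪ D2.Vars) → Prop)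
    (ρr12 : Config Dm (R1.Vars ∪ R2.Vars) → Prop)
    (Φ1 : Config Dm D1.Vars → Set (Config Dm R1.Vars))
    (Φ2 : Config Dm D2.Vars → Set (Config Dm R2.Vars))
    (hΦ1 : ConformanceMapping D1 R1 Φ1)
    (hΦ2 : ConformanceMapping D2 R2 Φ2)
    (Φ : Config Dm (D1.Vars ∪ D2.Vars) → Set (Config Dm (R1.Vars ∪ R2.Vars)))
    (hΦ : ∀ πd : Config Dm (D1.Vars ∪ D2.Vars),
      Φ πd = { πr | (R1.par R2 ρr12).ρ πr ∧
        ∃ πr1 ∈ Φ1 πd.restrictL, ∃ πr2 ∈ Φ2 πd.restrictR, πr = πr1.plus πr2 })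
    (πd : Config Dm (D1.Vars ∪ D2.Vars))
    (hπd : (D1.par D2 ρd12).ρ πd)
    (πr : Config Dm (R1.Vars ∪ R2.Vars))
    (hπr : πr ∈ Φ πd) :
    (D1.par D2 ρd12).Lang πd ⊆ (R1.par R2 ρr12).Lang πr := by
  rw [hΦ πd] at hπr
  obtain ⟨hρr, πr1, hπr1, πr2, hπr2, rfl⟩ := hπr
  obtain ⟨hρd12, hρd1, hρd2⟩ := hπd
  have hdisjR : Disjoint R1.Vars R2.Vars :=
    (List.pairwise_cons.mp (List.pairwise_cons.mp (List.pairwise_cons.mp hdisj).2).2).1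
      R2.Vars (by simp)
  intro w hw
  obtain ⟨⟨sd1, sd2⟩, hreach⟩ := hw
  obtain ⟨hev, h1, h2⟩ := par_reach_proj hreach
  have hL1 : (w.filter (fun a => a ∈ D1.alph)) ∈ R1.Lang πr1 :=
    ((hΦ1 πd.restrictL hρd1).2 πr1 hπr1).2 ⟨sd1, h1⟩
  have hL2 : (w.filter (fun a => a ∈ D2.alph)) ∈ R2.Lang πr2 :=
    ((hΦ2 πd.restrictR hρd2).2 πr2 hπr2).2 ⟨sd2, h2⟩
  rw [halph1] at hL1
  rw [halph2] at hL2
  obtain ⟨t1, ht1⟩ := hL1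
  obtain ⟨t2, ht2⟩ := hL2
  have hev' : ∀ a ∈ w, a ∈ R1.alph ∪ R2.alph := by
    rw [← halph1, ← halph2]; exact hev
  exact ⟨(t1, t2), par_reach_compose hdisjR πr1 πr2 w hev' t1 t2 ht1 ht2⟩
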